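/- For every positive natural number k, (-F_{2k} + √(5·F_{2k}² + 4)) / 2 = F_{2k-1}. Equivalently, setting ħ := 1/F_{2k}, the value λ := 2ħ/(-1 + √(5 + 4ħ²)) satisfies λ = 1/F_{2k-1}. -/

import Mathlib

lemma fib_cassini_aux : ∀ n : ℕ,
    ((Nat.fib n : ℤ)) ^ 2 + (Nat.fib n : ℤ) * (Nat.fib (n + 1) : ℤ)
      - (Nat.fib (n + 1) : ℤ) ^ 2 = -(-1 : ℤ) ^ n := by
  intro n
  induction n with
  | zero => simp
  | succ m ih =>
    rw [Nat.fib_add_two]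
    push_cast
    push_cast at ih
    ring_nf
    ring_nf at ih
    linarith [ih]

/-- For `k ≥ 1`, `(-F_{2k} + √(5F_{2k}² + 4))/2 = F_{2k-1}`; equivalently, at
`ħ = 1/F_{2k}` the value `λ = 2ħ/(-1 + √(5 + 4ħ²))` equals `1/F_{2k-1}`. -/
theorem bohr_sommerfeld_fib (k : ℕ) (hk : 0 < k) :
    (-(Nat.fib (2 * k) : ℝ) + Real.sqrt (5 * (Nat.fib (2 * k) : ℝ) ^ 2 + 4)) / 2
      = (Nat.fib (2 * k - 1) : ℝ) ∧
    (∀ hbar : ℝ, hbar = 1 / (Nat.fib (2 * k) : ℝ) →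
      2 * hbar / (-1 + Real.sqrt (5 + 4 * hbar ^ 2))
        = 1 / (Nat.fib (2 * k - 1) : ℝ)) := by
  set n := 2 * k - 1 with hn
  have h2k : 2 * k = n + 1 := by omega
  have key : ((Nat.fib n : ℤ)) ^ 2 + (Nat.fib n : ℤ) * (Nat.fib (n + 1) : ℤ)
      - (Nat.fib (n + 1) : ℤ) ^ 2 = 1 := by
    rw [fib_cassini_aux n]
    have : Odd n := ⟨k - 1, by omega⟩
    rw [this.neg_one_pow]; ring
  set F : ℝ := (Nat.fib (2 * k) : ℝ) with hF
  set F' : ℝ := (Nat.fib n : ℝ) with hF'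
  have keyR : F' ^ 2 + F' * F - F ^ 2 = 1 := by
    rw [hF, hF', h2k]
    exact_mod_cast key
  have hsq : Real.sqrt (5 * F ^ 2 + 4) = 2 * F' + F := by
    rw [show 5 * F ^ 2 + 4 = (2 * F' + F) ^ 2 by nlinarith]
    apply Real.sqrt_sq
    positivity
  have hFpos : 0 < F := by
    rw [hF]; exact_mod_cast Nat.fib_pos.mpr (by omega)
  have hF'pos : 0 < F' := by
    rw [hF']; exact_mod_cast Nat.fib_pos.mpr (by omega)
  constructor
  · rw [hsq]; ring
  · intro hbar hb
    rw [hb]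
    have h1 : 5 + 4 * (1 / F) ^ 2 = (5 * F ^ 2 + 4) / F ^ 2 := by
      field_simp
    have h2 : Real.sqrt ((5 * F ^ 2 + 4) / F ^ 2) = (2 * F' + F) / F := by
      rw [Real.sqrt_div (by positivity), Real.sqrt_sq hFpos.le, hsq]
    rw [h1, h2]
    have h3 : -1 + (2 * F' + F) / F = 2 * F' / F := by field_simp; ring
    rw [h3]
    field_simp
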